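/- Consider the constrained optimization min_w ∑_{i∈I_c} w_i² subject to |(1/|I_c|)∑_{i∈I_c} w_i φ_k(X_i) − c_k| ≤ δ_k for k = 1,…,d, where c ∈ ℝ^d, δ ∈ ℝ^d_{≥0}, and Φ_c ∈ ℝ^{|I_c|×d} has rows φ(X_i). Then the optimal solution has the form ŵ = Φ_c λ̂ / |I_c| up to scaling, where λ̂ ∈ ℝ^d minimizes the unconstrained convex dual objective L̂(λ) = λᵀ Σ̂_c λ − 2λᵀ c + 2 ∑_k δ_k|λ_k| with Σ̂_c = Φ_cᵀΦ_c/|I_c|; equivalently, the primal optimal weights lie in the column space of Φ_c and the primal optimum equals the negative of the dual optimum value. -/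

import Mathlib

open Finset

namespace Stmt9Aux

variable {E : Type*} [NormedAddCommGroup E] [NormedSpace ℝ E]
variable {ι : Type*} [Fintype ι]

/-- The finitely generated cone with generators `g`. -/
def fgCone (g : ι → E) : Set E :=
  {x | ∃ t : ι → ℝ, (∀ i, 0 ≤ t i) ∧ x = ∑ i, t i • g i}

lemma convex_fgCone (g : ι → E) : Convex ℝ (fgCone g) := by
  rintro x ⟨t, ht, rfl⟩ y ⟨s, hs, rfl⟩ a b ha hb _
  refine ⟨fun i => a * t i + b * s i, fun i => add_nonneg (mul_nonneg ha (ht i)) (mul_nonneg hb (hs i)), ?_⟩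
  rw [Finset.smul_sum, Finset.smul_sum, ← Finset.sum_add_distrib]
  exact Finset.sum_congr rfl fun i _ => by
    simp [add_smul, mul_smul]

lemma zero_mem_fgCone (g : ι → E) : (0 : E) ∈ fgCone g :=
  ⟨fun _ => 0, fun _ => le_refl _, by simp⟩

lemma smul_gen_mem_fgCone (g : ι → E) (s : ℝ) (hs : 0 ≤ s) (i : ι) :
    s • g i ∈ fgCone g := by
  classical
  refine ⟨fun j => if j = i then s else 0, fun j => by positivity, ?_⟩
  rw [Finset.sum_eq_single i (fun b _ hb => by simp [hb]) (by simp)]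
  simp

/-- The piece of the cone supported on `S`. -/
def piece (g : ι → E) (S : Finset ι) : Set E :=
  {x | ∃ t : ι → ℝ, (∀ i, 0 ≤ t i) ∧ (∀ i ∉ S, t i = 0) ∧ x = ∑ i, t i • g i}

lemma isClosed_piece (g : ι → E) (S : Finset ι)
    (hS : LinearIndependent ℝ (fun i : {x // x ∈ S} => g ↑i)) :
    IsClosed (piece g S) := by
  classical
  set F : ({x // x ∈ S} → ℝ) →ₗ[ℝ] E :=
    { toFun := fun u => ∑ i, u i • g ↑i
      map_add' := fun u v => by
        simp [add_smul, Finset.sum_add_distrib]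
      map_smul' := fun a u => by
        simp [mul_smul, Finset.smul_sum] } with hF
  have hker : LinearMap.ker F = ⊥ := by
    rw [LinearMap.ker_eq_bot']
    intro u hu
    funext i
    exact Fintype.linearIndependent_iff.mp hS u hu i
  have hemb := LinearMap.isClosedEmbedding_of_injective (f := F) hker
  have horth : IsClosed {u : {x // x ∈ S} → ℝ | ∀ i, 0 ≤ u i} := by
    have : {u : {x // x ∈ S} → ℝ | ∀ i, 0 ≤ u i} = ⋂ i, {u | 0 ≤ u i} := by
      ext u; simp [Set.mem_iInter]
    rw [this]
    exact isClosed_iInter fun i => isClosed_le continuous_const (continuous_apply i)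
  have himg : piece g S = F '' {u | ∀ i, 0 ≤ u i} := by
    ext x
    constructor
    · rintro ⟨t, ht, ht0, rfl⟩
      refine ⟨fun i => t ↑i, fun i => ht _, ?_⟩
      show ∑ i : {x // x ∈ S}, t ↑i • g ↑i = ∑ i, t i • g i
      rw [Finset.sum_coe_sort S (fun i => t i • g i)]
      exact Finset.sum_subset (Finset.subset_univ S) fun i _ hi => by
        simp [ht0 i hi]
    · rintro ⟨u, hu, rfl⟩
      refine ⟨fun i => if h : i ∈ S then u ⟨i, h⟩ else 0,
        fun i => by by_cases h : i ∈ S <;> simp [h, hu _], fun i hi => by simp [hi], ?_⟩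
      show F u = _
      rw [hF]
      simp only [LinearMap.coe_mk, AddHom.coe_mk]
      have h1 : ∑ x : ι, (if h : x ∈ S then u ⟨x, h⟩ else 0) • g x
          = ∑ x ∈ S, (if h : x ∈ S then u ⟨x, h⟩ else 0) • g x :=
        (Finset.sum_subset (Finset.subset_univ S) fun i _ hi => by simp [hi]).symm
      rw [h1, ← Finset.sum_coe_sort S (fun x => (if h : x ∈ S then u ⟨x, h⟩ else 0) • g x)]
      exact Finset.sum_congr rfl fun i _ => by simp [i.2]
  rw [himg]
  exact hemb.isClosedMap _ horth


/-- Reduction step: if the generators in the support of `t` admit a nontrivial linear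
relation with a positive coefficient, we can shrink the support. -/
lemma reduce_support (g : ι → E) (t : ι → ℝ) (ht : ∀ i, 0 ≤ t i) (s : ι → ℝ)
    (hs0 : ∑ i, s i • g i = 0) (hsupp : ∀ i, s i ≠ 0 → t i ≠ 0)
    (j : ι) (hj : 0 < s j) :
    ∃ t' : ι → ℝ, (∀ i, 0 ≤ t' i) ∧ (∑ i, t' i • g i = ∑ i, t i • g i) ∧
      (∀ i, t' i ≠ 0 → t i ≠ 0) ∧ ∃ j', t j' ≠ 0 ∧ t' j' = 0 := by
  classical
  set P : Finset ι := Finset.univ.filter (fun i => 0 < s i) with hP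
  have hjP : j ∈ P := by simp [hP, hj]
  have hPne : P.Nonempty := ⟨j, hjP⟩
  obtain ⟨j', hj'P, hj'⟩ := Finset.exists_mem_eq_inf' hPne (fun i => t i / s i)
  set τ : ℝ := P.inf' hPne (fun i => t i / s i) with hτdef
  have hsj' : 0 < s j' := by simpa [hP] using hj'P
  have hτ0 : 0 ≤ τ := by
    rw [hj']
    exact div_nonneg (ht j') hsj'.le
  refine ⟨fun i => t i - τ * s i, ?_, ?_, ?_, ⟨j', ?_, ?_⟩⟩
  · intro i
    show (0:ℝ) ≤ t i - τ * s i
    by_cases hsi : 0 < s i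
    · have hle : τ ≤ t i / s i := Finset.inf'_le _ (by simp [hP, hsi])
      have := (le_div_iff₀ hsi).mp hle
      linarith
    · push_neg at hsi
      have : τ * s i ≤ 0 := mul_nonpos_of_nonneg_of_nonpos hτ0 hsi
      have := ht i
      linarith
  · rw [← sub_eq_zero]
    have : ∑ i, (t i - τ * s i) • g i - ∑ i, t i • g i = -(τ • ∑ i, s i • g i) := by
      rw [← Finset.sum_sub_distrib, Finset.smul_sum, ← Finset.sum_neg_distrib]
      exact Finset.sum_congr rfl fun i _ => by
        rw [sub_smul, smul_smul]
        abel
    rw [this, hs0, smul_zero, neg_zero]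
  · intro i hi
    intro hti
    apply hi
    have : s i = 0 := by
      by_contra hsi
      exact (hsupp i hsi) hti
    simp [hti, this]
  · exact hsupp j' (ne_of_gt hsj')
  · have : τ = t j' / s j' := hj'
    rw [this]
    field_simp
    ring
  
/-- Carathéodory-type lemma: every element of the cone is a nonnegative combination
supported on a linearly independent subfamily. -/
lemma cara (g : ι → E) : ∀ (N : ℕ) (t : ι → ℝ),
    (Finset.univ.filter (fun i => t i ≠ 0)).card ≤ N → (∀ i, 0 ≤ t i) →
    ∃ S : Finset ι, LinearIndependent ℝ (fun i : {x // x ∈ S} => g ↑i) ∧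
      (∑ i, t i • g i) ∈ piece g S := by
  classical
  intro N
  induction N with
  | zero =>
    intro t hcard ht
    have hS : Finset.univ.filter (fun i => t i ≠ 0) = ∅ := Finset.card_eq_zero.mp
      (Nat.le_zero.mp hcard)
    have ht0 : ∀ i, t i = 0 := by
      intro i
      by_contra hi
      have : i ∈ Finset.univ.filter (fun i => t i ≠ 0) := by simp [hi]
      simp [hS] at this
    refine ⟨∅, ?_, ⟨t, ht, fun i _ => ht0 i, rfl⟩⟩
    have : IsEmpty {x : ι // x ∈ (∅ : Finset ι)} := by
      exact ⟨fun x => Finset.notMem_empty _ x.2⟩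
    exact linearIndependent_empty_type
  | succ N IH =>
    intro t hcard ht
    set S : Finset ι := Finset.univ.filter (fun i => t i ≠ 0) with hSdef
    by_cases hLI : LinearIndependent ℝ (fun i : {x // x ∈ S} => g ↑i)
    · exact ⟨S, hLI, ⟨t, ht, fun i hi => by simpa [hSdef] using hi, rfl⟩⟩
    · obtain ⟨cc, hcc0, i₀, hi₀⟩ := Fintype.not_linearIndependent_iff.mp hLI
      set s : ι → ℝ := fun i => if h : i ∈ S then cc ⟨i, h⟩ else 0 with hsdef
      have hssum : ∑ i, s i • g i = 0 := by
        have h1 : ∑ i, s i • g i = ∑ i ∈ S, s i • g i :=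
          (Finset.sum_subset (Finset.subset_univ S) fun i _ hi => by
            simp [hsdef, hi]).symm
        rw [h1, ← Finset.sum_coe_sort S (fun i => s i • g i), ← hcc0]
        exact Finset.sum_congr rfl fun i _ => by simp [hsdef, i.2]
      have hssupp : ∀ i, s i ≠ 0 → t i ≠ 0 := by
        intro i hi
        by_contra hti
        have : i ∉ S := by simp [hSdef, hti]
        simp [hsdef, this] at hi
      have hex : ∃ j, 0 < s j ∨ 0 < -s j := by
        refine ⟨↑i₀, ?_⟩
        have : s ↑i₀ = cc i₀ := by simp [hsdef, i₀.2]
        rcases lt_or_gt_of_ne hi₀ with h | h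
        · right; rw [this]; linarith
        · left; rw [this]; exact h
      obtain ⟨j, hj⟩ := hex
      have hred : ∃ t' : ι → ℝ, (∀ i, 0 ≤ t' i) ∧ (∑ i, t' i • g i = ∑ i, t i • g i) ∧
          (∀ i, t' i ≠ 0 → t i ≠ 0) ∧ ∃ j', t j' ≠ 0 ∧ t' j' = 0 := by
        rcases hj with hj | hj
        · exact reduce_support g t ht s hssum hssupp j hj
        · refine reduce_support g t ht (fun i => -s i) ?_ (fun i hi => hssupp i (by simpa using hi)) j hj
          have hneg : ∑ i : ι, (fun i => -s i) i • g i = -∑ i : ι, s i • g i := by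
            rw [← Finset.sum_neg_distrib]
            exact Finset.sum_congr rfl fun i _ => by simp [neg_smul]
          rw [hneg, hssum, neg_zero]
      obtain ⟨t', ht', hsum', hsupp', j', htj', ht'j'⟩ := hred
      have hsub : Finset.univ.filter (fun i => t' i ≠ 0) ⊆ S.erase j' := by
        intro i hi
        simp only [Finset.mem_filter, Finset.mem_univ, true_and] at hi
        refine Finset.mem_erase.mpr ⟨?_, by simp [hSdef, hsupp' i hi]⟩
        intro h
        rw [h] at hi
        exact hi ht'j'
      have hcard' : (Finset.univ.filter (fun i => t' i ≠ 0)).card ≤ N := by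
        have h1 : (S.erase j').card = S.card - 1 :=
          Finset.card_erase_of_mem (by simp [hSdef, htj'])
        have h2 : S.card ≤ N + 1 := hcard
        have h3 : 1 ≤ S.card := Finset.card_pos.mpr ⟨j', by simp [hSdef, htj']⟩
        have := Finset.card_le_card hsub
        omega
      obtain ⟨S', hS', hmem⟩ := IH t' hcard' ht'
      rw [hsum'] at hmem
      exact ⟨S', hS', hmem⟩

lemma isClosed_fgCone (g : ι → E) : IsClosed (fgCone g) := by
  classical
  have hU : fgCone g = ⋃ S : Finset ι,
      (if LinearIndependent ℝ (fun i : {x // x ∈ S} => g ↑i) then piece g S else ∅) := by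
    ext x
    simp only [Set.mem_iUnion]
    constructor
    · rintro ⟨t, ht, rfl⟩
      obtain ⟨S, hS, hmem⟩ := cara g (Finset.univ.filter (fun i => t i ≠ 0)).card t le_rfl ht
      exact ⟨S, by rw [if_pos hS]; exact hmem⟩
    · rintro ⟨S, hx⟩
      by_cases hS : LinearIndependent ℝ (fun i : {x // x ∈ S} => g ↑i)
      · rw [if_pos hS] at hx
        obtain ⟨t, ht, _, rfl⟩ := hx
        exact ⟨t, ht, rfl⟩
      · rw [if_neg hS] at hx
        exact absurd hx (Set.notMem_empty x)
  rw [hU]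
  exact isClosed_iUnion_of_finite fun S => by
    by_cases hS : LinearIndependent ℝ (fun i : {x // x ∈ S} => g ↑i)
    · rw [if_pos hS]; exact isClosed_piece g S hS
    · rw [if_neg hS]; exact isClosed_empty

/-- Separation: if `x` is not in the cone, there is a linear functional nonpositive on the
generators and positive at `x`. -/
lemma fgCone_separation (g : ι → E) (x : E) (hx : x ∉ fgCone g) :
    ∃ f : E →L[ℝ] ℝ, (∀ i, f (g i) ≤ 0) ∧ 0 < f x := by
  obtain ⟨f, u, hfa, hux⟩ :=
    geometric_hahn_banach_closed_point (convex_fgCone g) (isClosed_fgCone g) hx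
  have hu : 0 < u := by
    have := hfa 0 (zero_mem_fgCone g)
    simpa using this
  refine ⟨f, ?_, ?_⟩
  · intro i
    by_contra h
    push_neg at h
    have hs : (0:ℝ) < u / f (g i) := div_pos hu h
    have hmem := smul_gen_mem_fgCone g (u / f (g i)) hs.le i
    have := hfa _ hmem
    rw [map_smul] at this
    simp only [smul_eq_mul] at this
    rw [div_mul_cancel₀ u (ne_of_gt h)] at this
    exact lt_irrefl u this
  · linarith

end Stmt9Aux

open Matrix

theorem stmt9 {n d : ℕ} (hn : 0 < n)
    (Φ : Matrix (Fin n) (Fin d) ℝ) (c : Fin d → ℝ) (δ : Fin d → ℝ) (hδ : ∀ k, 0 ≤ δ k)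
    (feasible : (Fin n → ℝ) → Prop)
    (hfeas : ∀ w, feasible w ↔
      ∀ k, |(1 / (n : ℝ)) * ∑ i, w i * Φ i k - c k| ≤ δ k)
    (what : Fin n → ℝ) (hwfeas : feasible what)
    (hopt : ∀ w, feasible w → ∑ i, what i ^ 2 ≤ ∑ i, w i ^ 2)
    (Sighat : Matrix (Fin d) (Fin d) ℝ) (hSig : Sighat = ((n : ℝ)⁻¹) • (Φᵀ * Φ))
    (Lhat : (Fin d → ℝ) → ℝ)
    (hL : ∀ lam, Lhat lam =
      lam ⬝ᵥ (Sighat *ᵥ lam) - 2 * (lam ⬝ᵥ c) + 2 * ∑ k, δ k * |lam k|) :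
    ∃ lamhat : Fin d → ℝ,
      (∀ lam, Lhat lamhat ≤ Lhat lam) ∧
      what = Φ *ᵥ lamhat ∧
      ∑ i, what i ^ 2 = -((n : ℝ) * Lhat lamhat) := by
  classical
  have hn0 : (n : ℝ) ≠ 0 := Nat.cast_ne_zero.mpr hn.ne'
  have hnpos : (0 : ℝ) < n := Nat.cast_pos.mpr hn
  set a : Fin d → (Fin n → ℝ) := fun k i => Φ i k with ha
  set mh : Fin d → ℝ := fun k => (1 / (n : ℝ)) * ∑ i, what i * Φ i k with hmh
  have hfw : ∀ k, |mh k - c k| ≤ δ k := (hfeas what).mp hwfeas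
  set g : (Fin d ⊕ Fin d) → (Fin n → ℝ) := fun j =>
    Sum.elim (fun k => if mh k - c k = -δ k then a k else 0)
             (fun k => if mh k - c k = δ k then -a k else 0) j with hg
  -- Step 1: `what` lies in the cone generated by `g`.
  have hmem : what ∈ Stmt9Aux.fgCone g := by
    by_contra hmem
    obtain ⟨f, hfg, hfw0⟩ := Stmt9Aux.fgCone_separation g what hmem
    set v : Fin n → ℝ := fun i => f (fun j => if i = j then (1:ℝ) else 0) with hv
    have hfrep : ∀ y : Fin n → ℝ, f y = ∑ i, y i * v i := by
      intro y
      conv_lhs => rw [pi_eq_sum_univ y]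
      rw [map_sum]
      exact Finset.sum_congr rfl fun i _ => by
        rw [ContinuousLinearMap.map_smul]; simp [hv, smul_eq_mul]
    set β : Fin d → ℝ := fun k => f (a k) with hβ
    have hlow : ∀ k, mh k - c k = -δ k → β k ≤ 0 := by
      intro k hk
      have := hfg (Sum.inl k)
      simpa [hg, hk] using this
    have hhigh : ∀ k, mh k - c k = δ k → 0 ≤ β k := by
      intro k hk
      have h0 := hfg (Sum.inr k)
      have h2 : g (Sum.inr k) = -a k := by
        show (if mh k - c k = δ k then -a k else 0) = -a k
        rw [if_pos hk]
      rw [h2, map_neg] at h0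
      have : -β k ≤ 0 := h0
      linarith
    -- per-coordinate threshold
    have hτ : ∀ k, ∃ τ : ℝ, 0 < τ ∧ ∀ t : ℝ, 0 ≤ t → t ≤ τ →
        |mh k - (t / (n : ℝ)) * β k - c k| ≤ δ k := by
      intro k
      have habs := hfw k
      rcases lt_trichotomy (β k) 0 with hb | hb | hb
      · -- β < 0 : the constraint value moves up; must have slack at the top
        have hne : mh k - c k ≠ δ k := fun h => absurd (hhigh k h) (by linarith)
        have hlt : mh k - c k < δ k := lt_of_le_of_ne (abs_le.mp habs).2 hne
        refine ⟨(n : ℝ) * (δ k - (mh k - c k)) / (-β k),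
          div_pos (mul_pos hnpos (by linarith)) (by linarith), ?_⟩
        intro t ht0 htle
        have h1 : -δ k ≤ mh k - c k := (abs_le.mp habs).1
        have h2 : t * (-β k) ≤ (n : ℝ) * (δ k - (mh k - c k)) := by
          have := mul_le_mul_of_nonneg_right htle (by linarith : (0:ℝ) ≤ -β k)
          rwa [div_mul_cancel₀ _ (by linarith : -β k ≠ 0)] at this
        rw [abs_le]
        constructor
        · have : 0 ≤ (t / (n : ℝ)) * (-β k) :=
            mul_nonneg (by positivity) (by linarith)
          nlinarith
        · have h3 : (t / (n : ℝ)) * (-β k) ≤ δ k - (mh k - c k) := by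
            rw [div_mul_eq_mul_div, div_le_iff₀ hnpos]
            nlinarith
          nlinarith
      · refine ⟨1, one_pos, fun t _ _ => by simpa [hb] using habs⟩
      · -- β > 0 : the constraint value moves down; must have slack at the bottom
        have hne : mh k - c k ≠ -δ k := fun h => absurd (hlow k h) (by linarith)
        have hlt : -δ k < mh k - c k := lt_of_le_of_ne (abs_le.mp habs).1 (Ne.symm hne)
        refine ⟨(n : ℝ) * ((mh k - c k) + δ k) / β k,
          div_pos (mul_pos hnpos (by linarith)) hb, ?_⟩
        intro t ht0 htle
        have h1 : mh k - c k ≤ δ k := (abs_le.mp habs).2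
        have h2 : t * β k ≤ (n : ℝ) * ((mh k - c k) + δ k) := by
          have := mul_le_mul_of_nonneg_right htle hb.le
          rwa [div_mul_cancel₀ _ hb.ne'] at this
        rw [abs_le]
        constructor
        · have h3 : (t / (n : ℝ)) * β k ≤ (mh k - c k) + δ k := by
            rw [div_mul_eq_mul_div, div_le_iff₀ hnpos]
            nlinarith
          nlinarith
        · have : 0 ≤ (t / (n : ℝ)) * β k :=
            mul_nonneg (by positivity) hb.le
          nlinarith
    choose τ hτpos hτbound using hτ
    set T : Set ℝ := insert 1 (Set.range τ) with hT
    have hTfin : T.Finite := (Set.finite_range τ).insert 1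
    have hTne : T.Nonempty := ⟨1, Set.mem_insert _ _⟩
    set t0 : ℝ := sInf T with ht0
    have ht0mem : t0 ∈ T := hTne.csInf_mem hTfin
    have ht0pos : 0 < t0 := by
      rcases ht0mem with h | ⟨k, hk⟩
      · rw [h]; exact one_pos
      · rw [← hk]; exact hτpos k
    have ht0le : ∀ k, t0 ≤ τ k := fun k =>
      csInf_le hTfin.bddBelow (Set.mem_insert_iff.mpr (Or.inr ⟨k, rfl⟩))
    set F : ℝ := f what with hF
    set Q : ℝ := ∑ i, v i ^ 2 with hQ
    have hQ0 : 0 ≤ Q := Finset.sum_nonneg fun i _ => sq_nonneg _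
    set t1 : ℝ := min t0 (F / (Q + 1)) with ht1
    have ht1pos : 0 < t1 := lt_min ht0pos (by positivity)
    set w : Fin n → ℝ := fun i => what i - t1 * v i with hw
    have hβsum : ∀ k, β k = ∑ i, Φ i k * v i := fun k => hfrep (a k)
    have hwval : ∀ k, (1 / (n : ℝ)) * ∑ i, w i * Φ i k - c k
        = mh k - (t1 / (n : ℝ)) * β k - c k := by
      intro k
      rw [hβsum k]
      have : ∑ i, w i * Φ i k = (∑ i, what i * Φ i k) - t1 * ∑ i, Φ i k * v i := by
        rw [Finset.mul_sum, ← Finset.sum_sub_distrib]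
        exact Finset.sum_congr rfl fun i _ => by rw [hw]; ring
      rw [this, hmh]
      field_simp
    have hwfeas' : feasible w := by
      rw [hfeas]
      intro k
      rw [hwval k]
      exact hτbound k t1 ht1pos.le ((min_le_left _ _).trans (ht0le k))
    have hlt : ∑ i, w i ^ 2 < ∑ i, what i ^ 2 := by
      have hexp : ∑ i, w i ^ 2
          = ∑ i, what i ^ 2 - 2 * t1 * (∑ i, what i * v i) + t1 ^ 2 * Q := by
        rw [hQ, Finset.mul_sum, Finset.mul_sum, ← Finset.sum_sub_distrib,
          ← Finset.sum_add_distrib]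
        exact Finset.sum_congr rfl fun i _ => by rw [hw]; ring
      have hwhatv : ∑ i, what i * v i = F := (hfrep what).symm
      rw [hexp, hwhatv]
      have hFpos : 0 < F := hfw0
      have hle : t1 * (Q + 1) ≤ F := by
        have := min_le_right t0 (F / (Q + 1))
        calc t1 * (Q + 1) ≤ (F / (Q + 1)) * (Q + 1) :=
              mul_le_mul_of_nonneg_right this (by positivity)
          _ = F := by field_simp
      nlinarith
    exact absurd (hopt w hwfeas') (not_le.mpr hlt)
  -- Step 2: extract the dual vector with KKT sign conditions.
  obtain ⟨t, ht, hsum⟩ := hmem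
  set lamhat : Fin d → ℝ := fun k =>
    (if mh k - c k = -δ k then t (Sum.inl k) else 0)
      - (if mh k - c k = δ k then t (Sum.inr k) else 0) with hlam
  have hterm : ∀ (k : Fin d) (i : Fin n),
      t (Sum.inl k) * g (Sum.inl k) i + t (Sum.inr k) * g (Sum.inr k) i
        = Φ i k * lamhat k := by
    intro k i
    have hA : g (Sum.inl k) = if mh k - c k = -δ k then a k else 0 := rfl
    have hB : g (Sum.inr k) = if mh k - c k = δ k then -a k else 0 := rfl
    have hC : lamhat k = (if mh k - c k = -δ k then t (Sum.inl k) else 0)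
        - (if mh k - c k = δ k then t (Sum.inr k) else 0) := rfl
    rw [hA, hB, hC]
    split_ifs with hl hh <;> simp [ha] <;> ring
  have hG1 : what = Φ *ᵥ lamhat := by
    funext i
    have h1 : what i = ∑ k, (t (Sum.inl k) * g (Sum.inl k) i
        + t (Sum.inr k) * g (Sum.inr k) i) := by
      rw [hsum, Finset.sum_apply]
      simp only [Pi.smul_apply, smul_eq_mul]
      rw [Fintype.sum_sum_type, ← Finset.sum_add_distrib]
    have h2 : (Φ *ᵥ lamhat) i = ∑ k, Φ i k * lamhat k := by
      simp [Matrix.mulVec, dotProduct]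
    rw [h1, h2]
    exact Finset.sum_congr rfl fun k _ => hterm k i
  have hG3 : ∀ k, lamhat k * (mh k - c k) = -(δ k * |lamhat k|) := by
    intro k
    by_cases hl : mh k - c k = -δ k <;> by_cases hh : mh k - c k = δ k
    · have hδ0 : δ k = 0 := by linarith [hl.symm.trans hh]
      simp [hδ0] at hl
      simp [hl, hδ0]
    · have hlv : lamhat k = t (Sum.inl k) := by
        have hC : lamhat k = (if mh k - c k = -δ k then t (Sum.inl k) else 0)
            - (if mh k - c k = δ k then t (Sum.inr k) else 0) := rfl
        rw [hC, if_pos hl, if_neg hh, sub_zero]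
      have hnn : 0 ≤ lamhat k := hlv ▸ ht (Sum.inl k)
      rw [hl, abs_of_nonneg hnn]
      ring
    · have hlv : lamhat k = -t (Sum.inr k) := by
        have hC : lamhat k = (if mh k - c k = -δ k then t (Sum.inl k) else 0)
            - (if mh k - c k = δ k then t (Sum.inr k) else 0) := rfl
        rw [hC, if_neg hl, if_pos hh, zero_sub]
      have hnp : lamhat k ≤ 0 := by rw [hlv]; linarith [ht (Sum.inr k)]
      rw [hh, abs_of_nonpos hnp]
      ring
    · have hlv : lamhat k = 0 := by
        have hC : lamhat k = (if mh k - c k = -δ k then t (Sum.inl k) else 0)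
            - (if mh k - c k = δ k then t (Sum.inr k) else 0) := rfl
        rw [hC, if_neg hl, if_neg hh, sub_zero]
      simp [hlv]
  -- Step 3: algebra.
  set q : (Fin d → ℝ) → ℝ := fun lam => (Φ *ᵥ lam) ⬝ᵥ (Φ *ᵥ lam) with hq
  set W : ℝ := what ⬝ᵥ what with hW
  have hqsq : ∀ lam, q lam = ∑ i, ((Φ *ᵥ lam) i) ^ 2 := by
    intro lam; simp [hq, dotProduct, sq]
  have hWsum : W = ∑ i, what i ^ 2 := by
    simp [hW, dotProduct, sq]
  have hQuad : ∀ lam, lam ⬝ᵥ (Sighat *ᵥ lam) = (n : ℝ)⁻¹ * q lam := by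
    intro lam
    have h3 : lam ⬝ᵥ ((Φᵀ * Φ) *ᵥ lam) = q lam := by
      rw [← mulVec_mulVec, dotProduct_mulVec, vecMul_transpose, hq]
    have h2 : ∀ y : Fin d → ℝ, lam ⬝ᵥ ((n : ℝ)⁻¹ • y) = (n : ℝ)⁻¹ * (lam ⬝ᵥ y) := by
      intro y
      simp only [dotProduct, Pi.smul_apply, smul_eq_mul, Finset.mul_sum]
      exact Finset.sum_congr rfl fun k _ => by ring
    rw [hSig, smul_mulVec, h2, h3]
  have hnk : ∀ k, (n : ℝ) * mh k = ∑ i, what i * Φ i k := by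
    intro k
    have : mh k = (1 / (n : ℝ)) * ∑ i, what i * Φ i k := rfl
    rw [this]; field_simp
  have hDot : ∀ lam, what ⬝ᵥ (Φ *ᵥ lam) = (n : ℝ) * ∑ k, lam k * mh k := by
    intro lam
    rw [dotProduct_mulVec, Finset.mul_sum]
    simp only [vecMul, dotProduct]
    refine Finset.sum_congr rfl fun k _ => ?_
    rw [← hnk k]; ring
  have hkey : ∀ lam, 0 ≤ q lam - 2 * (what ⬝ᵥ (Φ *ᵥ lam)) + W := by
    intro lam
    have hdw : what ⬝ᵥ (Φ *ᵥ lam) = ∑ i, what i * (Φ *ᵥ lam) i := by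
      simp [dotProduct]
    have hexp : q lam - 2 * (what ⬝ᵥ (Φ *ᵥ lam)) + W
        = ∑ i, ((Φ *ᵥ lam) i - what i) ^ 2 := by
      rw [hqsq lam, hWsum, hdw, Finset.mul_sum, ← Finset.sum_sub_distrib,
        ← Finset.sum_add_distrib]
      exact Finset.sum_congr rfl fun i _ => by ring
    rw [hexp]
    exact Finset.sum_nonneg fun i _ => sq_nonneg _
  have hterm0 : ∀ (lam : Fin d → ℝ) (k : Fin d),
      0 ≤ lam k * (mh k - c k) + δ k * |lam k| := by
    intro lam k
    have h1 : -(lam k * (mh k - c k)) ≤ |lam k| * |mh k - c k| := by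
      calc -(lam k * (mh k - c k)) ≤ |lam k * (mh k - c k)| := neg_le_abs _
        _ = |lam k| * |mh k - c k| := abs_mul _ _
    have h2 : |lam k| * |mh k - c k| ≤ |lam k| * δ k :=
      mul_le_mul_of_nonneg_left (hfw k) (abs_nonneg _)
    have h3 : δ k * |lam k| = |lam k| * δ k := mul_comm _ _
    linarith
  have hdc : ∀ lam : Fin d → ℝ, lam ⬝ᵥ c = ∑ k, lam k * c k := fun lam => rfl
  have hLn : ∀ lam, (n : ℝ) * Lhat lam
      = q lam - 2 * (n : ℝ) * (∑ k, lam k * c k)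
        + 2 * (n : ℝ) * ∑ k, δ k * |lam k| := by
    intro lam
    calc (n : ℝ) * Lhat lam
        = (n : ℝ) * ((n : ℝ)⁻¹ * q lam - 2 * (∑ k, lam k * c k)
            + 2 * ∑ k, δ k * |lam k|) := by rw [hL lam, hQuad lam, hdc lam]
      _ = ((n : ℝ) * (n : ℝ)⁻¹) * q lam - 2 * (n : ℝ) * (∑ k, lam k * c k)
            + 2 * (n : ℝ) * ∑ k, δ k * |lam k| := by ring
      _ = q lam - 2 * (n : ℝ) * (∑ k, lam k * c k)
            + 2 * (n : ℝ) * ∑ k, δ k * |lam k| := by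
          rw [mul_inv_cancel₀ hn0, one_mul]
  have hqlamW : q lamhat = W := by
    show (Φ *ᵥ lamhat) ⬝ᵥ (Φ *ᵥ lamhat) = W
    rw [← hG1]
  have h2W : (n : ℝ) * ∑ k, lamhat k * mh k = W := by
    have hdot := hDot lamhat
    rw [← hG1] at hdot
    exact hdot.symm
  clear_value q W mh lamhat
  have hvalue : (n : ℝ) * Lhat lamhat = -W := by
    rw [hLn lamhat]
    have h1 : ∑ k, δ k * |lamhat k|
        = (∑ k, lamhat k * c k) - ∑ k, lamhat k * mh k := by
      calc ∑ k, δ k * |lamhat k|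
          = ∑ k, (lamhat k * c k - lamhat k * mh k) :=
            Finset.sum_congr rfl fun k _ => by linear_combination hG3 k
        _ = (∑ k, lamhat k * c k) - ∑ k, lamhat k * mh k :=
            Finset.sum_sub_distrib _ _
    rw [hqlamW, h1]
    linear_combination (-2 : ℝ) * h2W
  have hmain : ∀ lam, Lhat lamhat ≤ Lhat lam := by
    intro lam
    have hq1 := hkey lam
    rw [hDot lam] at hq1
    have hpos : 0 ≤ ∑ k, (lam k * (mh k - c k) + δ k * |lam k|) :=
      Finset.sum_nonneg fun k _ => hterm0 lam k
    have hsplit : ∑ k, (lam k * (mh k - c k) + δ k * |lam k|)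
        = (∑ k, lam k * mh k) - (∑ k, lam k * c k) + ∑ k, δ k * |lam k| := by
      calc ∑ k, (lam k * (mh k - c k) + δ k * |lam k|)
          = ∑ k, (lam k * mh k - lam k * c k + δ k * |lam k|) :=
            Finset.sum_congr rfl fun k _ => by ring
        _ = _ := by rw [Finset.sum_add_distrib, Finset.sum_sub_distrib]
    have hpos' : 0 ≤ (n : ℝ) * (∑ k, (lam k * (mh k - c k) + δ k * |lam k|)) :=
      mul_nonneg hnpos.le hpos
    rw [hsplit] at hpos'
    have hineq : -W ≤ (n : ℝ) * Lhat lam := by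
      rw [hLn lam]
      have hdist : (n : ℝ) * ((∑ k, lam k * mh k) - (∑ k, lam k * c k)
            + ∑ k, δ k * |lam k|)
          = (n : ℝ) * (∑ k, lam k * mh k) - (n : ℝ) * (∑ k, lam k * c k)
            + (n : ℝ) * ∑ k, δ k * |lam k| := by ring
      rw [hdist] at hpos'
      linarith [hq1, hpos']
    have : (n : ℝ) * Lhat lamhat ≤ (n : ℝ) * Lhat lam := by
      rw [hvalue]; exact hineq
    exact le_of_mul_le_mul_left this hnpos
  refine ⟨lamhat, hmain, hG1, ?_⟩
  rw [hvalue, neg_neg, hWsum]
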